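/- For all real α, φ₁, φ₂: 1 - cos(φ_{1α} - φ_{2α}) = (1 - cos(φ₁ - φ₂)) / (ω_α(φ₁) ω_α(φ₂)), where ω_α(φ) = cosh α - sinh α cos φ and φ_α is defined by sin φ_α = sin φ/ω_α(φ), cos φ_α = (-sinh α + cosh α cos φ)/ω_α(φ). -/
import Mathlib

lemma omega_pos (α φ : ℝ) : 0 < Real.cosh α - Real.sinh α * Real.cos φ := by
  have h1 : |Real.sinh α * Real.cos φ| < Real.cosh α := by
    rcases eq_or_ne (Real.sinh α) 0 with h | h
    · simp [h, Real.cosh_pos]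
    · calc |Real.sinh α * Real.cos φ| = |Real.sinh α| * |Real.cos φ| := abs_mul _ _
        _ ≤ |Real.sinh α| * 1 := by
            exact mul_le_mul_of_nonneg_left (Real.abs_cos_le_one φ) (abs_nonneg _)
        _ = |Real.sinh α| := mul_one _
        _ < Real.cosh α := by
            have e1 : Real.cosh α - Real.sinh α = Real.exp (-α) := Real.cosh_sub_sinh α
            have e2 : Real.cosh α + Real.sinh α = Real.exp α := Real.cosh_add_sinh α
            have p1 := Real.exp_pos (-α); have p2 := Real.exp_pos α
            rcases abs_cases (Real.sinh α) with ⟨he, _⟩ | ⟨he, _⟩ <;> nlinarith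
  linarith [abs_lt.1 h1]

theorem stmt15 (α : ℝ) (Φ : ℝ → ℝ)
    (hsin : ∀ φ, Real.sin (Φ φ) =
      Real.sin φ / (Real.cosh α - Real.sinh α * Real.cos φ))
    (hcos : ∀ φ, Real.cos (Φ φ) =
      (-Real.sinh α + Real.cosh α * Real.cos φ) /
        (Real.cosh α - Real.sinh α * Real.cos φ))
    (φ₁ φ₂ : ℝ) :
    1 - Real.cos (Φ φ₁ - Φ φ₂) =
      (1 - Real.cos (φ₁ - φ₂)) /
        ((Real.cosh α - Real.sinh α * Real.cos φ₁) *
          (Real.cosh α - Real.sinh α * Real.cos φ₂)) := by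
  have h1 := (omega_pos α φ₁).ne'
  have h2 := (omega_pos α φ₂).ne'
  have hc := Real.cosh_sq_sub_sinh_sq α
  have hs1 := Real.sin_sq_add_cos_sq φ₁
  have hs2 := Real.sin_sq_add_cos_sq φ₂
  rw [Real.cos_sub, Real.cos_sub, hsin, hsin, hcos, hcos]
  field_simp
  linear_combination (1 - Real.cos φ₁ * Real.cos φ₂) * hc
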